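/- (Equivalence of the two characterizations of the weakened stable dominant energy condition) Let T be a stress-energy tensor on (N+1)-dimensional Minkowski space. Then the following are equivalent: (i) for every future-directed causal vector v, the vector u(v) = -ηTv is future-directed timelike or zero; (ii) either T = 0, or for every future-directed causal vector v, the vector u(v) is future-directed timelike. -/

import Mathlib

open Matrix

/-- The Minkowski metric `diag(-1,1,…,1)` on `ℝ^{N+1}`. -/
noncomputable def eta (N : ℕ) : Matrix (Fin (N+1)) (Fin (N+1)) ℝ :=
  Matrix.diagonal (fun i => if i = 0 then (-1 : ℝ) else 1)

/-- The Minkowski bilinear form `η(x,y) = -x₀y₀ + ∑ᵢ xᵢyᵢ`. -/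
noncomputable def mdot {N : ℕ} (x y : Fin (N+1) → ℝ) : ℝ :=
  x ⬝ᵥ (eta N).mulVec y

/-- Future-directed timelike: `η(v,v) < 0` and `v₀ > 0`. -/
def FDTimelike {N : ℕ} (v : Fin (N+1) → ℝ) : Prop :=
  mdot v v < 0 ∧ 0 < v 0

/-- Future-directed lightlike: `v ≠ 0`, `η(v,v) = 0` and `v₀ > 0`. -/
def FDLightlike {N : ℕ} (v : Fin (N+1) → ℝ) : Prop :=
  v ≠ 0 ∧ mdot v v = 0 ∧ 0 < v 0

/-- Future-directed causal: future-directed timelike or lightlike. -/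
def FDCausal {N : ℕ} (v : Fin (N+1) → ℝ) : Prop :=
  FDTimelike v ∨ FDLightlike v

/-- The bilinear form associated to a matrix: `T(v,w) = vᵀ T w`. -/
noncomputable def Tbil {N : ℕ} (T : Matrix (Fin (N+1)) (Fin (N+1)) ℝ)
    (v w : Fin (N+1) → ℝ) : ℝ :=
  v ⬝ᵥ T.mulVec w

/-- The endomorphism associated to a stress-energy tensor: `u(v) = -ηTv`. -/
noncomputable def endo {N : ℕ} (T : Matrix (Fin (N+1)) (Fin (N+1)) ℝ)
    (v : Fin (N+1) → ℝ) : Fin (N+1) → ℝ :=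
  -((eta N).mulVec (T.mulVec v))

/-- The dominant energy condition: every future-directed causal vector is
sent by the associated endomorphism to a future-directed causal vector or zero. -/
def DEC {N : ℕ} (T : Matrix (Fin (N+1)) (Fin (N+1)) ℝ) : Prop :=
  ∀ v : Fin (N+1) → ℝ, FDCausal v → FDCausal (endo T v) ∨ endo T v = 0

lemma mdot_expand {N : ℕ} (x y : Fin (N+1) → ℝ) :
    mdot x y = -(x 0 * y 0) + ∑ i : Fin N, x i.succ * y i.succ := by
  unfold mdot eta
  simp [Matrix.mulVec_diagonal, dotProduct, Fin.sum_univ_succ, Fin.succ_ne_zero]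

lemma mdot_neg_of_timelike_causal {N : ℕ} {x y : Fin (N+1) → ℝ}
    (hx : FDTimelike x) (hy : FDCausal y) : mdot x y < 0 := by
  have hx1 := hx.1
  have hx0 := hx.2
  have hy0 : 0 < y 0 := by rcases hy with h | h; exact h.2; exact h.2.2
  have hyy : mdot y y ≤ 0 := by rcases hy with h | h; exact le_of_lt h.1; exact le_of_eq h.2.1
  rw [mdot_expand] at hx1 hyy ⊢
  set SX := ∑ i : Fin N, x i.succ * x i.succ with hSX
  set SY := ∑ i : Fin N, y i.succ * y i.succ with hSY
  have hX : SX < x 0 * x 0 := by linarith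
  have hY : SY ≤ y 0 * y 0 := by linarith
  have hXnn : 0 ≤ SX := Finset.sum_nonneg fun i _ => mul_self_nonneg _
  have hCS : (∑ i : Fin N, x i.succ * y i.succ) ^ 2 ≤ SX * SY := by
    have := Finset.sum_mul_sq_le_sq_mul_sq Finset.univ (fun i : Fin N => x i.succ)
      (fun i : Fin N => y i.succ)
    simpa [hSX, hSY, sq] using this
  have h1 : SX * SY < (x 0 * y 0) ^ 2 := by
    calc SX * SY ≤ SX * (y 0 * y 0) := mul_le_mul_of_nonneg_left hY hXnn
    _ < (x 0 * x 0) * (y 0 * y 0) := by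
        apply mul_lt_mul_of_pos_right hX (mul_pos hy0 hy0)
    _ = (x 0 * y 0) ^ 2 := by ring
  have h2 : (∑ i : Fin N, x i.succ * y i.succ) ^ 2 < (x 0 * y 0) ^ 2 := lt_of_le_of_lt hCS h1
  have h3 : ∑ i : Fin N, x i.succ * y i.succ < x 0 * y 0 := by
    have hpos : 0 < x 0 * y 0 := mul_pos hx0 hy0
    nlinarith [h2]
  linarith

lemma eta_mulVec_apply {N : ℕ} (a : Fin (N+1) → ℝ) (i : Fin (N+1)) :
    ((eta N).mulVec a) i = (if i = 0 then -1 else 1) * a i := by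
  simp [eta, Matrix.mulVec_diagonal]

lemma endo_eq_zero_iff {N : ℕ} (T : Matrix (Fin (N+1)) (Fin (N+1)) ℝ)
    (v : Fin (N+1) → ℝ) : endo T v = 0 ↔ T.mulVec v = 0 := by
  constructor
  · intro h
    funext i
    have h2 : ((eta N).mulVec (T.mulVec v)) i = 0 := by
      have := congrFun h i
      simp only [endo, Pi.neg_apply, Pi.zero_apply, neg_eq_zero] at this
      exact this
    rw [eta_mulVec_apply] at h2
    by_cases hi : i = 0
    · subst hi; simpa using h2
    · simpa [hi] using h2
  · intro h
    funext i
    simp only [endo, h, Matrix.mulVec_zero, neg_zero, Pi.zero_apply]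

lemma mdot_endo {N : ℕ} (T : Matrix (Fin (N+1)) (Fin (N+1)) ℝ)
    (w y : Fin (N+1) → ℝ) : mdot (endo T w) y = -(T.mulVec w ⬝ᵥ y) := by
  have key : ∀ i, (endo T w) i * ((eta N).mulVec y) i = -((T.mulVec w) i * y i) := by
    intro i
    simp only [endo, Pi.neg_apply, eta_mulVec_apply]
    by_cases hi : i = 0 <;> simp [hi]
  unfold mdot dotProduct
  simp only [key, Finset.sum_neg_distrib]

lemma e0_timelike {N : ℕ} : FDTimelike ((Pi.single 0 1 : Fin (N+1) → ℝ)) := by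
  constructor
  · rw [mdot_expand]
    have : ∀ i : Fin N, (Pi.single 0 1 : Fin (N+1) → ℝ) i.succ = 0 := by
      intro i; simp [Pi.single_apply, Fin.succ_ne_zero]
    simp [this]
  · simp

lemma e0j_lightlike {N : ℕ} (j : Fin (N+1)) (hj : j ≠ 0) :
    FDLightlike ((Pi.single 0 1 : Fin (N+1) → ℝ) + (Pi.single j 1 : Fin (N+1) → ℝ)) := by
  obtain ⟨k, rfl⟩ := Fin.exists_succ_eq_of_ne_zero hj
  refine ⟨?_, ?_, ?_⟩
  · intro hcon
    have := congrFun hcon 0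
    simp [Pi.single_apply, (Fin.succ_ne_zero k).symm] at this
  · rw [mdot_expand]
    have h0 : ((Pi.single 0 1 : Fin (N+1) → ℝ) + (Pi.single k.succ 1 : Fin (N+1) → ℝ)) 0 = 1 := by
      simp [Pi.single_apply, (Fin.succ_ne_zero k).symm]
    have hs : ∀ i : Fin N, ((Pi.single 0 1 : Fin (N+1) → ℝ) + (Pi.single k.succ 1 : Fin (N+1) → ℝ)) i.succ
        = if i = k then 1 else 0 := by
      intro i
      simp [Pi.single_apply, Fin.succ_ne_zero, Fin.succ_inj]
    rw [h0]
    simp [hs]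
  · simp [Pi.single_apply, (Fin.succ_ne_zero k).symm]

/-- Equivalence of the two characterizations of the weakened stable dominant
energy condition. -/
theorem wsdec_characterizations {N : ℕ} (hN : 1 ≤ N)
    (T : Matrix (Fin (N+1)) (Fin (N+1)) ℝ) (hsymm : T.IsSymm) :
    (∀ v : Fin (N+1) → ℝ, FDCausal v → FDTimelike (endo T v) ∨ endo T v = 0) ↔
    (T = 0 ∨ ∀ v : Fin (N+1) → ℝ, FDCausal v → FDTimelike (endo T v)) := by
  constructor
  · intro h
    by_cases hall : ∀ v, FDCausal v → FDTimelike (endo T v)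
    · exact Or.inr hall
    · push_neg at hall
      obtain ⟨v₀, hv₀c, hv₀nt⟩ := hall
      have hz : endo T v₀ = 0 := (h v₀ hv₀c).resolve_left hv₀nt
      have hTv₀ : T.mulVec v₀ = 0 := (endo_eq_zero_iff T v₀).mp hz
      have hall0 : ∀ w, FDCausal w → T.mulVec w = 0 := by
        intro w hw
        rcases h w hw with htl | h0
        · exfalso
          have h1 : mdot (endo T w) v₀ < 0 := mdot_neg_of_timelike_causal htl hv₀c
          rw [mdot_endo] at h1
          have h2 : T.mulVec w ⬝ᵥ v₀ = 0 := by
            rw [dotProduct_comm, Matrix.dotProduct_mulVec, ← Matrix.mulVec_transpose,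
              hsymm.eq, hTv₀, zero_dotProduct]
          rw [h2] at h1
          linarith
        · exact (endo_eq_zero_iff T w).mp h0
      left
      ext i j
      have col : ∀ j' : Fin (N+1), T.mulVec ((Pi.single j' 1 : Fin (N+1) → ℝ)) = fun i => T i j' := by
        intro j'; rw [Matrix.mulVec_single]; funext i; simp
      by_cases hj : j = 0
      · subst hj
        have := congrFun (hall0 _ (Or.inl e0_timelike)) i
        rw [col 0] at this
        simpa using this
      · have h1 := congrFun (hall0 _ (Or.inr (e0j_lightlike j hj))) i
        rw [Matrix.mulVec_add, Pi.add_apply, col 0, col j] at h1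
        have h2 := congrFun (hall0 _ (Or.inl e0_timelike)) i
        rw [col 0] at h2
        simp only [Pi.zero_apply] at h1 h2
        simp only [Matrix.zero_apply]
        linarith
  · rintro (rfl | h) v hv
    · right
      rw [endo_eq_zero_iff]
      simp
    · exact Or.inl (h v hv)
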